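/- Let a, b, c, n be integers such that gcd(a, b, c) = 1, gcd(2a, gcd(4b, c)) = 4, n is even, and 2a² + 4b² − c²·n = 36. Then b is odd and 4 divides a. -/

import Mathlib

/-- If `gcd(a, b, c) = 1`, `gcd(2a, 4b, c) = 4`, `n` is even and
`2a² + 4b² − c²·n = 36`, then `b` is odd and `4 ∣ a`. -/
theorem stmt_5 (a b c n : ℤ) (h1 : Int.gcd a (Int.gcd b c) = 1)
    (h4 : Int.gcd (2 * a) (Int.gcd (4 * b) c) = 4) (hn : Even n)
    (heq : 2 * a ^ 2 + 4 * b ^ 2 - c ^ 2 * n = 36) :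
    Odd b ∧ (4 : ℤ) ∣ a := by
  have hA : (4 : ℤ) ∣ 2 * a := by
    have := @Int.gcd_dvd_left (2 * a) (Int.gcd (4 * b) c)
    rw [h4] at this; exact_mod_cast this
  have hC : (4 : ℤ) ∣ c := by
    have h := @Int.gcd_dvd_right (2 * a) (Int.gcd (4 * b) c)
    rw [h4] at h
    have h2 := (@Int.gcd_dvd_right (4 * b) c)
    exact dvd_trans (by exact_mod_cast h) h2
  have ha2 : (2 : ℤ) ∣ a := by omega
  have hb : Odd b := by
    by_contra hb
    rw [Int.not_odd_iff_even] at hb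
    have h2 : (2 : ℤ) ∣ (Int.gcd a (Int.gcd b c) : ℤ) :=
      Int.dvd_coe_gcd ha2 (Int.dvd_coe_gcd hb.two_dvd (by omega))
    rw [h1] at h2
    norm_num at h2
  refine ⟨hb, ?_⟩
  obtain ⟨a', rfl⟩ := ha2
  obtain ⟨c', rfl⟩ := hC
  obtain ⟨k, rfl⟩ := hb
  obtain ⟨m, rfl⟩ := hn
  have key : 8 * a' ^ 2 =
      8 * ((2 - k ^ 2 - k + 2 * c' ^ 2 * m) + (2 - k ^ 2 - k + 2 * c' ^ 2 * m)) := by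
    linear_combination heq
  have key2 : a' ^ 2 =
      (2 - k ^ 2 - k + 2 * c' ^ 2 * m) + (2 - k ^ 2 - k + 2 * c' ^ 2 * m) :=
    mul_left_cancel₀ (by norm_num) key
  have hea : Even a' := by
    have : Even (a' ^ 2) := ⟨_, key2⟩
    exact (Int.even_pow.mp this).1
  obtain ⟨j, rfl⟩ := hea
  exact ⟨j, by ring⟩
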